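/- Principle of localization: if f, g ∈ L¹(T) and f = g almost everywhere on an open interval I ⊂ T, then for each point t ∈ I the Fourier series of f and g are equi-convergent at t: Σ_{n=−M}^{N} (a_n(f) − a_n(g)) e^{int} → 0 as M → ∞ and N → ∞ independently. -/

import Mathlib

open MeasureTheory Filter Real Set

/-- The `n`-th Fourier coefficient of a `2π`-periodic function `f : ℝ → ℂ`,
`a_n(f) = (1/(2π)) ∫_{-π}^{π} f(x) e^{-inx} dx`. -/
noncomputable def fourierCoef (f : ℝ → ℂ) (n : ℤ) : ℂ :=
  (1 / (2 * π)) • ∫ x in (-π)..π, f x * Complex.exp (-Complex.I * (n : ℂ) * (x : ℂ))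

lemma norm_exp_eq_one {z : ℂ} (hz : z.re = 0) : ‖Complex.exp z‖ = 1 := by
  rw [Complex.norm_exp, hz, Real.exp_zero]

lemma exp_I_ne_one {u : ℝ} (h0 : u ≠ 0) (h1 : |u| ≤ π) :
    Complex.exp (Complex.I * u) ≠ 1 := by
  intro h
  rw [Complex.exp_eq_one_iff] at h
  obtain ⟨n, hn⟩ := h
  have hu : u = n * (2 * π) := by
    have := congrArg Complex.im hn
    simpa using this
  have h2π : (0:ℝ) < 2 * π := by positivity
  have habs : |u| = |(n:ℝ)| * (2 * π) := by rw [hu, abs_mul, abs_of_pos h2π]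
  have hn0 : n ≠ 0 := by
    rintro rfl
    simp at hu
    exact h0 hu
  have : (1:ℝ) ≤ |(n:ℝ)| := by
    rw [← Int.cast_abs]
    exact_mod_cast Int.one_le_abs hn0
  nlinarith [pi_pos]

lemma geom_sum_Icc (z : ℂ) (hz0 : z ≠ 0) (hz1 : z ≠ 1) (M N : ℕ) :
    ∑ n ∈ Finset.Icc (-(M:ℤ)) (N:ℤ), z ^ n
      = (z ^ ((N:ℤ)+1) - z ^ (-(M:ℤ))) / (z - 1) := by
  have key : Finset.Icc (-(M:ℤ)) (N:ℤ)
      = Finset.image (fun k : ℕ => (k:ℤ) - M) (Finset.range (M+N+1)) := by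
    ext n
    simp only [Finset.mem_Icc, Finset.mem_image, Finset.mem_range]
    constructor
    · rintro ⟨h1, h2⟩; exact ⟨(n + M).toNat, by omega, by omega⟩
    · rintro ⟨k, hk, rfl⟩; omega
  rw [key, Finset.sum_image (by intro a _ b _ h; simp only at h; omega)]
  have step : ∀ k ∈ Finset.range (M+N+1), z ^ ((k:ℤ) - M) = z ^ (-(M:ℤ)) * z ^ (k:ℕ) := by
    intro k _
    rw [sub_eq_add_neg, zpow_add₀ hz0, zpow_natCast, mul_comm]
  rw [Finset.sum_congr rfl step, ← Finset.mul_sum, geom_sum_eq hz1]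
  rw [← mul_div_assoc]
  congr 1
  rw [mul_sub, mul_one, ← zpow_natCast z (M+N+1), ← zpow_add₀ hz0]
  congr 2
  push_cast; ring

lemma periodic_integrableOn {f : ℝ → ℂ} (hper : Function.Periodic f (2*π))
    (hf : IntegrableOn f (Ioc (-π) π)) (a : ℝ) :
    IntegrableOn f (Ioc a (a + 2*π)) := by
  have h2π : (0:ℝ) < 2*π := by positivity
  haveI : VAddInvariantMeasure (AddSubgroup.zmultiples (2*π)) ℝ volume :=
    ⟨fun c s _ => measure_preimage_add _ _ _⟩
  have h1 := isAddFundamentalDomain_Ioc h2π a (volume)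
  have h2 := isAddFundamentalDomain_Ioc h2π (-π) (volume)
  refine (h1.integrableOn_iff h2 (fun g x => hper.map_vadd_zmultiples g x)).mpr ?_
  have : -π + 2*π = π := by ring
  rw [this]
  exact hf

open FourierTransform in
lemma riemann_lebesgue (Φ : ℝ → ℂ) :
    Tendsto (fun ξ : ℝ => ∫ x : ℝ, Complex.exp (-Complex.I * ξ * x) * Φ x)
      (cocompact ℝ) (nhds 0) := by
  have key := Real.tendsto_integral_exp_smul_cocompact Φ
  have hdiv : Tendsto (fun ξ : ℝ => ξ / (2*π)) (cocompact ℝ) (cocompact ℝ) := by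
    rw [cocompact_eq_atBot_atTop (α := ℝ)]
    have h2π : (0:ℝ) < 2*π := by positivity
    refine Tendsto.sup_sup ?_ ?_
    · exact tendsto_id.atBot_div_const h2π
    · exact tendsto_id.atTop_div_const h2π
  have := key.comp hdiv
  refine this.congr fun ξ => ?_
  simp only [Function.comp]
  congr 1
  ext x
  rw [Circle.smul_def, Real.fourierChar_apply]
  congr 2
  push_cast
  have hπ : (π:ℂ) ≠ 0 := by exact_mod_cast Real.pi_ne_zero
  field_simp

lemma mul_exp_intervalIntegrable {h : ℝ → ℂ} {a b : ℝ} (hab : a ≤ b)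
    (hint : IntegrableOn h (Ioc a b)) (e : ℝ → ℂ) (he : Continuous e)
    (hbd : ∀ x, ‖e x‖ ≤ 1) :
    IntervalIntegrable (fun x => h x * e x) volume a b := by
  rw [intervalIntegrable_iff_integrableOn_Ioc_of_le hab]
  have key : Integrable (fun x : ℝ => e x * h x) (volume.restrict (Ioc a b)) := by
    refine Integrable.bdd_mul (c := 1) hint he.aestronglyMeasurable ?_
    filter_upwards with x using hbd x
  exact key.congr (by filter_upwards with x using mul_comm _ _)

lemma phi_integrable {h : ℝ → ℂ} (t ε : ℝ) (hε : 0 < ε) (hεπ : ε < π)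
    (hint : IntegrableOn h (Ioc (t-π) (t+π)))
    (hzero : ∀ᵐ x ∂(volume.restrict (Ioo (t-ε) (t+ε))), h x = 0) :
    IntegrableOn (fun x => h x * (Complex.exp (Complex.I * ((t:ℂ) - x)) - 1)⁻¹)
      (Ioc (t-π) (t+π)) := by
  have hπ := Real.pi_pos
  set ψ : ℝ → ℂ := fun x => (Complex.exp (Complex.I * ((t:ℂ) - x)) - 1)⁻¹ with hψ
  have contψ : ∀ s : Set ℝ, s ⊆ Icc (t-π) (t+π) → (∀ x ∈ s, x ≠ t) → ContinuousOn ψ s := by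
    intro s hs hst
    apply ContinuousOn.inv₀
    · apply Continuous.continuousOn
      exact (Complex.continuous_exp.comp (continuous_const.mul
        (continuous_const.sub Complex.continuous_ofReal))).sub continuous_const
    · intro x hx
      refine sub_ne_zero.mpr ?_
      have hx' := hs hx
      have : Complex.I * ((t:ℂ) - x) = Complex.I * ((t - x : ℝ) : ℂ) := by push_cast; ring
      rw [this]
      apply exp_I_ne_one (sub_ne_zero.mpr (Ne.symm (hst x hx)))
      rw [abs_le]
      constructor <;> [skip; skip] <;> cases' hx' with h1 h2 <;> linarith
  have piece : ∀ a b : ℝ, a ≤ b → Icc a b ⊆ Icc (t-π) (t+π) → (∀ x ∈ Icc a b, x ≠ t) →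
      IntegrableOn (fun x => h x * ψ x) (Ioc a b) := by
    intro a b hab hsub hne
    obtain ⟨C, hC⟩ := (isCompact_Icc (a := a) (b := b)).exists_bound_of_continuousOn
      (contψ _ hsub hne)
    have key : Integrable (fun x => ψ x * h x) (volume.restrict (Ioc a b)) := by
      refine Integrable.bdd_mul (c := C)
        (hint.mono_set (Ioc_subset_Ioc (hsub (left_mem_Icc.mpr hab)).1
          (hsub (right_mem_Icc.mpr hab)).2)) ?_ ?_
      · exact (contψ _ (Subset.trans Ioc_subset_Icc_self hsub)
          (fun x hx => hne x (Ioc_subset_Icc_self hx))).aestronglyMeasurable measurableSet_Ioc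
      · exact ae_restrict_of_forall_mem measurableSet_Ioc fun x hx => hC x (Ioc_subset_Icc_self hx)
    exact key.congr (by filter_upwards with x using mul_comm _ _)
  have mid : IntegrableOn (fun x => h x * ψ x) (Ioc (t-ε) (t+ε)) := by
    have hzero' : ∀ᵐ x ∂(volume.restrict (Ioc (t-ε) (t+ε))), h x = 0 := by
      rwa [← MeasureTheory.restrict_Ioo_eq_restrict_Ioc]
    refine (integrable_zero _ _ _).congr ?_
    filter_upwards [hzero'] with x hx
    rw [hx, zero_mul, Pi.zero_apply]
  have left : IntegrableOn (fun x => h x * ψ x) (Ioc (t-π) (t-ε)) := by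
    refine piece _ _ (by linarith) (Icc_subset_Icc le_rfl (by linarith)) fun x hx => ?_
    cases' hx with h1 h2; intro hxt; rw [hxt] at h2; linarith
  have right : IntegrableOn (fun x => h x * ψ x) (Ioc (t+ε) (t+π)) := by
    refine piece _ _ (by linarith) (Icc_subset_Icc (by linarith) le_rfl) fun x hx => ?_
    cases' hx with h1 h2; intro hxt; rw [hxt] at h1; linarith
  have cover : Ioc (t-π) (t+π) ⊆ Ioc (t-π) (t-ε) ∪ (Ioc (t-ε) (t+ε) ∪ Ioc (t+ε) (t+π)) := by
    intro x hx
    cases' hx with h1 h2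
    rcases le_or_gt x (t-ε) with h | h
    · exact Or.inl ⟨h1, h⟩
    rcases le_or_gt x (t+ε) with h' | h'
    · exact Or.inr (Or.inl ⟨h, h'⟩)
    · exact Or.inr (Or.inr ⟨h', h2⟩)
  exact ((left.union (mid.union right)).mono_set cover)

/-- Principle of localization: if `f, g ∈ L¹(T)` agree a.e. on an open interval `(c, d)`,
then at each point `t` of that interval their Fourier series are equi-convergent:
`∑_{n=-M}^{N} (a_n(f) - a_n(g)) e^{int} → 0` as `M → ∞` and `N → ∞` independently. -/
theorem localization_principle (f g : ℝ → ℂ)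
    (hfper : Function.Periodic f (2 * π)) (hgper : Function.Periodic g (2 * π))
    (hf : IntegrableOn f (Ioc (-π) π)) (hg : IntegrableOn g (Ioc (-π) π))
    (c d : ℝ) (hcd : c < d)
    (heq : ∀ᵐ x ∂(volume.restrict (Ioo c d)), f x = g x)
    (t : ℝ) (ht : t ∈ Ioo c d) :
    Tendsto (fun MN : ℕ × ℕ =>
        ∑ n ∈ Finset.Icc (-(MN.1 : ℤ)) (MN.2 : ℤ),
          (fourierCoef f n - fourierCoef g n) * Complex.exp (Complex.I * (n : ℂ) * (t : ℂ)))
      atTop (nhds 0) := by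
  have hπ := Real.pi_pos
  set h : ℝ → ℂ := fun x => f x - g x with hh
  have hhper : Function.Periodic h (2*π) := fun x => by simp only [hh, hfper x, hgper x]
  have hhint : IntegrableOn h (Ioc (-π) π) := hf.sub hg
  have hzero : ∀ᵐ x ∂(volume.restrict (Ioo c d)), h x = 0 := by
    filter_upwards [heq] with x hx
    simp [hh, hx]
  obtain ⟨htc, htd⟩ := ht
  set ε : ℝ := min (min (t - c) (d - t)) π / 2 with hεdef
  have hε0 : 0 < ε := by
    apply div_pos _ two_pos
    exact lt_min (lt_min (by linarith) (by linarith)) hπ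
  have hεπ : ε < π := by
    have h1 : (t - c) ⊓ (d - t) ⊓ π ≤ π := min_le_right _ _
    rw [hεdef]; linarith
  have hεc : c < t - ε := by
    have h1 : (t - c) ⊓ (d - t) ⊓ π ≤ t - c := (min_le_left _ _).trans (min_le_left _ _)
    rw [hεdef]; linarith
  have hεd : t + ε < d := by
    have h1 : (t - c) ⊓ (d - t) ⊓ π ≤ d - t := (min_le_left _ _).trans (min_le_right _ _)
    rw [hεdef]; linarith
  have hint' : IntegrableOn h (Ioc (t-π) (t+π)) := by
    have := periodic_integrableOn hhper hhint (t-π)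
    rwa [show t-π+2*π = t+π by ring] at this
  have hzero' : ∀ᵐ x ∂(volume.restrict (Ioo (t-ε) (t+ε))), h x = 0 :=
    ae_restrict_of_ae_restrict_of_subset (Ioo_subset_Ioo (by linarith) (by linarith)) hzero
  set φ : ℝ → ℂ := fun x => h x * (Complex.exp (Complex.I * ((t:ℂ) - x)) - 1)⁻¹ with hφ
  have hφint : IntegrableOn φ (Ioc (t-π) (t+π)) := phi_integrable t ε hε0 hεπ hint' hzero'
  set F : ℝ → ℂ := fun ξ => ∫ x in (t-π)..(t+π), φ x * Complex.exp (-Complex.I * ξ * x) with hFdef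
  -- Riemann-Lebesgue for F
  have hRL : Tendsto F (cocompact ℝ) (nhds 0) := by
    have key := riemann_lebesgue ((Ioc (t-π) (t+π)).indicator φ)
    refine key.congr fun ξ => ?_
    rw [hFdef]
    simp only
    rw [intervalIntegral.integral_of_le (by linarith), ← integral_indicator measurableSet_Ioc]
    congr 1
    ext x
    by_cases hx : x ∈ Ioc (t-π) (t+π) <;> simp [Set.indicator_apply, hx, mul_comm]
  -- coefficient difference
  have hcoef : ∀ n : ℤ, fourierCoef f n - fourierCoef g n = fourierCoef h n := by
    intro n
    have hIf : IntervalIntegrable (fun x : ℝ => f x * Complex.exp (-Complex.I * (n:ℂ) * (x:ℂ)))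
        volume (-π) π :=
      mul_exp_intervalIntegrable (by linarith) hf _
        (Complex.continuous_exp.comp (continuous_const.mul Complex.continuous_ofReal))
        (fun x => le_of_eq (norm_exp_eq_one (by simp)))
    have hIg : IntervalIntegrable (fun x : ℝ => g x * Complex.exp (-Complex.I * (n:ℂ) * (x:ℂ)))
        volume (-π) π :=
      mul_exp_intervalIntegrable (by linarith) hg _
        (Complex.continuous_exp.comp (continuous_const.mul Complex.continuous_ofReal))
        (fun x => le_of_eq (norm_exp_eq_one (by simp)))
    rw [fourierCoef, fourierCoef, fourierCoef, ← smul_sub, ← intervalIntegral.integral_sub hIf hIg]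
    congr 1
    apply intervalIntegral.integral_congr
    intro x _
    simp only [hh]
    ring
  -- main identity
  have main : ∀ M N : ℕ,
      (∑ n ∈ Finset.Icc (-(M:ℤ)) (N:ℤ),
          fourierCoef h n * Complex.exp (Complex.I * (n:ℂ) * (t:ℂ)))
        = (1/(2*π) : ℝ) •
            (Complex.exp (Complex.I * (((N:ℝ)+1 : ℝ):ℂ) * (t:ℂ)) * F ((N:ℝ)+1)
              - Complex.exp (Complex.I * ((-(M:ℝ) : ℝ):ℂ) * (t:ℂ)) * F (-(M:ℝ))) := by
    intro M N
    have expcont : ∀ w : ℂ, Continuous fun x : ℝ => Complex.exp (w * x) := fun w =>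
      Complex.continuous_exp.comp (continuous_const.mul Complex.continuous_ofReal)
    -- step 1: pull sum inside integral
    have e1 : ∀ n : ℤ, fourierCoef h n * Complex.exp (Complex.I * (n:ℂ) * (t:ℂ))
        = (1/(2*π) : ℝ) • ∫ x in (-π)..π,
            h x * Complex.exp (-Complex.I * (n:ℂ) * (x:ℂ)) * Complex.exp (Complex.I * (n:ℂ) * (t:ℂ)) := by
      intro n
      rw [fourierCoef, smul_mul_assoc, ← intervalIntegral.integral_mul_const]
    have hII : ∀ n : ℤ, IntervalIntegrable
        (fun x : ℝ => h x * Complex.exp (-Complex.I * (n:ℂ) * (x:ℂ)) * Complex.exp (Complex.I * (n:ℂ) * (t:ℂ)))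
        volume (-π) π := by
      intro n
      have := (mul_exp_intervalIntegrable (by linarith : -π ≤ π) hhint
        (fun x : ℝ => Complex.exp (-Complex.I * (n:ℂ) * (x:ℂ)))
        (Complex.continuous_exp.comp (continuous_const.mul Complex.continuous_ofReal))
        (fun x => le_of_eq (norm_exp_eq_one (by simp)))).mul_const
        (Complex.exp (Complex.I * (n:ℂ) * (t:ℂ)))
      exact this
    have step1 : (∑ n ∈ Finset.Icc (-(M:ℤ)) (N:ℤ),
          fourierCoef h n * Complex.exp (Complex.I * (n:ℂ) * (t:ℂ)))
        = (1/(2*π) : ℝ) • ∫ x in (-π)..π, ∑ n ∈ Finset.Icc (-(M:ℤ)) (N:ℤ),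
            h x * Complex.exp (-Complex.I * (n:ℂ) * (x:ℂ)) * Complex.exp (Complex.I * (n:ℂ) * (t:ℂ)) := by
      rw [Finset.sum_congr rfl (fun n _ => e1 n), ← Finset.smul_sum]
      congr 1
      exact (intervalIntegral.integral_finset_sum (fun n _ => hII n)).symm
    -- step 2: rewrite the integrand as h x * Dirichlet-type kernel
    have e2 : ∀ x : ℝ, (∑ n ∈ Finset.Icc (-(M:ℤ)) (N:ℤ),
          h x * Complex.exp (-Complex.I * (n:ℂ) * (x:ℂ)) * Complex.exp (Complex.I * (n:ℂ) * (t:ℂ)))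
        = h x * ∑ n ∈ Finset.Icc (-(M:ℤ)) (N:ℤ), Complex.exp (Complex.I * (n:ℂ) * ((t:ℂ) - x)) := by
      intro x
      rw [Finset.mul_sum]
      refine Finset.sum_congr rfl fun n _ => ?_
      rw [mul_assoc, ← Complex.exp_add]
      congr 1
      ring
    -- step 3: shift the interval of integration by periodicity
    set G : ℝ → ℂ := fun x =>
      h x * ∑ n ∈ Finset.Icc (-(M:ℤ)) (N:ℤ), Complex.exp (Complex.I * (n:ℂ) * ((t:ℂ) - x)) with hG
    have hGper : Function.Periodic G (2*π) := by
      intro x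
      simp only [hG]
      rw [hhper x]
      congr 1
      refine Finset.sum_congr rfl fun n _ => ?_
      have key : Complex.I * (n:ℂ) * ((t:ℂ) - ((x + 2*π : ℝ):ℂ))
          = Complex.I * (n:ℂ) * ((t:ℂ) - (x:ℂ)) + ((-n : ℤ):ℂ) * (2*(π:ℂ)*Complex.I) := by
        push_cast; ring
      rw [key, Complex.exp_add, Complex.exp_int_mul_two_pi_mul_I, mul_one]
    have step3 : (∫ x in (-π)..π, G x) = ∫ x in (t-π)..(t+π), G x := by
      have := hGper.intervalIntegral_add_eq (-π) (t-π)
      rw [show -π+2*π = π by ring, show t-π+2*π = t+π by ring] at this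
      exact this
    -- step 4: a.e. rewrite of G as a difference involving φ
    have hae : ∀ᵐ x : ℝ, x ≠ t := by
      rw [ae_iff]
      have hset : {x : ℝ | ¬ x ≠ t} = {t} := by ext x; simp
      rw [hset]
      exact measure_singleton t
    have step4 : (∫ x in (t-π)..(t+π), G x)
        = ∫ x in (t-π)..(t+π),
            (φ x * Complex.exp (Complex.I * (((N:ℝ)+1 : ℝ):ℂ) * ((t:ℂ) - x))
              - φ x * Complex.exp (Complex.I * ((-(M:ℝ) : ℝ):ℂ) * ((t:ℂ) - x))) := by
      apply intervalIntegral.integral_congr_ae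
      filter_upwards [hae] with x hxt hx
      rw [uIoc_of_le (by linarith : t-π ≤ t+π)] at hx
      obtain ⟨hx1, hx2⟩ := hx
      set z : ℂ := Complex.exp (Complex.I * ((t:ℂ) - x)) with hz
      have hcast : Complex.I * ((t:ℂ) - x) = Complex.I * (((t - x : ℝ)):ℂ) := by push_cast; ring
      have hz0 : z ≠ 0 := Complex.exp_ne_zero _
      have hz1 : z ≠ 1 := by
        rw [hz, hcast]
        apply exp_I_ne_one (sub_ne_zero.mpr (Ne.symm hxt))
        rw [abs_le]
        constructor <;> linarith
      have hzpow : ∀ n : ℤ, Complex.exp (Complex.I * (n:ℂ) * ((t:ℂ) - x)) = z ^ n := by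
        intro n
        rw [hz, show Complex.I * (n:ℂ) * ((t:ℂ) - x) = (n:ℂ) * (Complex.I * ((t:ℂ) - x)) by ring,
          Complex.exp_int_mul]
      simp only [hG]
      rw [Finset.sum_congr rfl fun n _ => hzpow n, geom_sum_Icc z hz0 hz1 M N]
      have h1 : Complex.exp (Complex.I * (((N:ℝ)+1 : ℝ):ℂ) * ((t:ℂ) - x)) = z ^ ((N:ℤ)+1) := by
        rw [← hzpow ((N:ℤ)+1)]
        congr 2
        push_cast; ring
      have h2 : Complex.exp (Complex.I * ((-(M:ℝ) : ℝ):ℂ) * ((t:ℂ) - x)) = z ^ (-(M:ℤ)) := by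
        rw [← hzpow (-(M:ℤ))]
        congr 2
        push_cast; ring
      rw [h1, h2, hφ]
      simp only
      rw [div_eq_mul_inv]
      ring
    -- step 5: split and factor
    have hIφ : ∀ ξ : ℝ, IntervalIntegrable
        (fun x : ℝ => φ x * Complex.exp (Complex.I * ((ξ:ℂ)) * ((t:ℂ) - x)))
        volume (t-π) (t+π) := by
      intro ξ
      apply mul_exp_intervalIntegrable (by linarith) hφint
      · exact Complex.continuous_exp.comp (continuous_const.mul
          (continuous_const.sub Complex.continuous_ofReal))
      · intro x
        exact le_of_eq (norm_exp_eq_one (by simp))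
    have factor : ∀ ξ : ℝ,
        (∫ x in (t-π)..(t+π), φ x * Complex.exp (Complex.I * (ξ:ℂ) * ((t:ℂ) - x)))
          = Complex.exp (Complex.I * (ξ:ℂ) * (t:ℂ)) * F ξ := by
      intro ξ
      rw [hFdef]
      simp only
      rw [← intervalIntegral.integral_const_mul]
      apply intervalIntegral.integral_congr
      intro x _
      simp only
      rw [show Complex.exp (Complex.I * (ξ:ℂ) * ((t:ℂ) - x))
          = Complex.exp (Complex.I * (ξ:ℂ) * (t:ℂ)) * Complex.exp (-Complex.I * (ξ:ℂ) * (x:ℂ)) from by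
        rw [← Complex.exp_add]; congr 1; ring]
      ring
    have step5 : (∫ x in (t-π)..(t+π),
            (φ x * Complex.exp (Complex.I * (((N:ℝ)+1 : ℝ):ℂ) * ((t:ℂ) - x))
              - φ x * Complex.exp (Complex.I * ((-(M:ℝ) : ℝ):ℂ) * ((t:ℂ) - x))))
        = Complex.exp (Complex.I * (((N:ℝ)+1 : ℝ):ℂ) * (t:ℂ)) * F ((N:ℝ)+1)
            - Complex.exp (Complex.I * ((-(M:ℝ) : ℝ):ℂ) * (t:ℂ)) * F (-(M:ℝ)) := by
      rw [intervalIntegral.integral_sub (hIφ ((N:ℝ)+1)) (hIφ (-(M:ℝ))),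
        factor ((N:ℝ)+1), factor (-(M:ℝ))]
    rw [step1]
    congr 1
    rw [intervalIntegral.integral_congr (fun x _ => e2 x)]
    rw [step3, step4, step5]
  -- limits
  have hsnd : Tendsto (Prod.snd : ℕ×ℕ → ℕ) atTop atTop := by
    rw [← prod_atTop_atTop_eq]; exact tendsto_snd
  have hfst : Tendsto (Prod.fst : ℕ×ℕ → ℕ) atTop atTop := by
    rw [← prod_atTop_atTop_eq]; exact tendsto_fst
  have L1 : Tendsto (fun N : ℕ => F ((N:ℝ)+1)) atTop (nhds 0) := by
    apply hRL.comp
    rw [cocompact_eq_atBot_atTop (α := ℝ)]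
    refine Tendsto.mono_right ?_ le_sup_right
    exact tendsto_atTop_add_const_right atTop 1 tendsto_natCast_atTop_atTop
  have L2 : Tendsto (fun M : ℕ => F (-(M:ℝ))) atTop (nhds 0) := by
    apply hRL.comp
    rw [cocompact_eq_atBot_atTop (α := ℝ)]
    refine Tendsto.mono_right ?_ le_sup_left
    exact tendsto_neg_atTop_atBot.comp tendsto_natCast_atTop_atTop
  have hE1 : Tendsto (fun MN : ℕ×ℕ =>
      Complex.exp (Complex.I * (((MN.2:ℝ)+1 : ℝ):ℂ) * (t:ℂ)) * F ((MN.2:ℝ)+1)) atTop (nhds 0) := by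
    have hb : ∀ MN : ℕ×ℕ, ‖Complex.exp (Complex.I * (((MN.2:ℝ)+1 : ℝ):ℂ) * (t:ℂ)) * F ((MN.2:ℝ)+1)‖
        ≤ ‖F ((MN.2:ℝ)+1)‖ := fun MN => by
      rw [norm_mul, norm_exp_eq_one (by simp), one_mul]
    exact squeeze_zero_norm hb (by simpa using (L1.comp hsnd).norm)
  have hE2 : Tendsto (fun MN : ℕ×ℕ =>
      Complex.exp (Complex.I * ((-(MN.1:ℝ) : ℝ):ℂ) * (t:ℂ)) * F (-(MN.1:ℝ))) atTop (nhds 0) := by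
    have hb : ∀ MN : ℕ×ℕ, ‖Complex.exp (Complex.I * ((-(MN.1:ℝ) : ℝ):ℂ) * (t:ℂ)) * F (-(MN.1:ℝ))‖
        ≤ ‖F (-(MN.1:ℝ))‖ := fun MN => by
      rw [norm_mul, norm_exp_eq_one (by simp), one_mul]
    exact squeeze_zero_norm hb (by simpa using (L2.comp hfst).norm)
  have final := ((hE1.sub hE2).const_smul ((1:ℝ)/(2*π)))
  simp only [sub_zero, smul_zero] at final
  refine final.congr fun MN => ?_
  rw [← main MN.1 MN.2]
  refine (Finset.sum_congr rfl fun n _ => ?_).symm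
  rw [hcoef n]
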